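/- With the above setup, for all t ≥ 0: (I_p ⊗ 1₂ᵀ) D♯_{Q̃} D♯_{Q̃}(t) (I_p ⊗ 1₂) = (I_p ⊗ 1₂ᵀ) D♯_{Q̄} D♯_{Q̄}(t) (I_p ⊗ 1₂) = 2 D♯_G D♯_G(t). -/

import Mathlib

open Matrix MeasureTheory

/-- `Q` is a generator matrix of a finite CTMC: nonnegative off-diagonal entries
and zero row sums. -/
def IsGenerator {n : Type*} [Fintype n] (Q : Matrix n n ℝ) : Prop :=
  (∀ i j, i ≠ j → 0 ≤ Q i j) ∧ ∀ i, ∑ j, Q i j = 0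

/-- Irreducibility of the CTMC with generator `Q`: the transition matrix `e^Q`
is entrywise positive. -/
def IsIrreducibleGen {n : Type*} [Fintype n] [DecidableEq n] (Q : Matrix n n ℝ) : Prop :=
  ∀ i j, 0 < NormedSpace.exp Q i j

/-- `π` is a stationary distribution of the generator `Q`: `πQ = 0`, `π1 = 1`. -/
def IsStationaryDist {n : Type*} [Fintype n] (Q : Matrix n n ℝ) (π : n → ℝ) : Prop :=
  (∀ i, 0 ≤ π i) ∧ (∑ i, π i = 1) ∧ π ᵥ* Q = 0

/-- The rank-one matrix `1π`. -/
def onePi {n : Type*} (π : n → ℝ) : Matrix n n ℝ :=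
  Matrix.of fun _ j => π j

/-- `Ds` is the deviation matrix `D♯ = ∫₀^∞ (e^{Qu} − 1π) du` of `Q`
(entrywise convergent integral). -/
def IsDeviation {n : Type*} [Fintype n] [DecidableEq n] (Q : Matrix n n ℝ) (π : n → ℝ)
    (Ds : Matrix n n ℝ) : Prop :=
  ∀ i j, IntegrableOn (fun u => NormedSpace.exp (u • Q) i j - π j) (Set.Ioi (0:ℝ)) MeasureTheory.volume ∧
    Ds i j = ∫ u in Set.Ioi (0:ℝ), (NormedSpace.exp (u • Q) i j - π j)

/-- `Dt` is the transient deviation matrix `D♯(t) = ∫₀^t (e^{Qu} − 1π) du` of `Q`. -/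
def IsTransientDeviation {n : Type*} [Fintype n] [DecidableEq n] (Q : Matrix n n ℝ) (π : n → ℝ)
    (Dt : ℝ → Matrix n n ℝ) : Prop :=
  ∀ t i j, Dt t i j = ∫ u in Set.Ioc (0:ℝ) t, (NormedSpace.exp (u • Q) i j - π j)

/-- The `p × 2p` matrix `I_p ⊗ 1₂ᵀ`, where the `2p` index set is `Fin p × Fin 2`. -/
def kronA (p : ℕ) : Matrix (Fin p) (Fin p × Fin 2) ℝ :=
  Matrix.of fun i jk => if jk.1 = i then 1 else 0

/-- The slowness condition `λ_i > S_i = ∑_{j≠i} q_{ij} = -G i i` for a generator `G`. -/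
def IsSlow {p : ℕ} (G : Matrix (Fin p) (Fin p) ℝ) (lam : Fin p → ℝ) : Prop :=
  ∀ i, -G i i < lam i

/-- The `2p × 2p` generator `Q̄` of the MTCP associated with a slow MMPP with
modulating generator `G` and rates `λ`: diagonal `2×2` blocks
`[[−λ_i, λ_i − S_i],[λ_i − S_i, −λ_i]]` (note `λ_i − S_i = λ_i + G i i`) and
off-diagonal blocks `q_{ij} I₂`. -/
def Qbar {p : ℕ} (G : Matrix (Fin p) (Fin p) ℝ) (lam : Fin p → ℝ) :
    Matrix (Fin p × Fin 2) (Fin p × Fin 2) ℝ :=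
  Matrix.of fun ik jl =>
    if ik.1 = jl.1 then (if ik.2 = jl.2 then -lam ik.1 else lam ik.1 + G ik.1 ik.1)
    else (if ik.2 = jl.2 then G ik.1 jl.1 else 0)

/-- The `2p × 2p` generator `Q̃` of the coupled MAP built from the MMPP: diagonal
blocks `[[−(λ_i + S_i), λ_i],[λ_i, −(λ_i + S_i)]]` (note `−(λ_i+S_i) = G i i − λ_i`)
and off-diagonal blocks `q_{ij} I₂`. -/
def Qtil {p : ℕ} (G : Matrix (Fin p) (Fin p) ℝ) (lam : Fin p → ℝ) :
    Matrix (Fin p × Fin 2) (Fin p × Fin 2) ℝ :=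
  Matrix.of fun ik jl =>
    if ik.1 = jl.1 then (if ik.2 = jl.2 then G ik.1 ik.1 - lam ik.1 else lam ik.1)
    else (if ik.2 = jl.2 then G ik.1 jl.1 else 0)

/-- The event-intensity matrix `D̄ = Q̄ − diag(Q̄)` of the associated MTCP. -/
def Dbar {p : ℕ} (G : Matrix (Fin p) (Fin p) ℝ) (lam : Fin p → ℝ) :
    Matrix (Fin p × Fin 2) (Fin p × Fin 2) ℝ :=
  Qbar G lam - Matrix.diagonal fun ik => Qbar G lam ik ik

/-- The event-intensity matrix `D̃` of the coupled MMPP: block diagonal with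
blocks `[[0, λ_i],[λ_i, 0]]`. -/
def Dtil {p : ℕ} (lam : Fin p → ℝ) : Matrix (Fin p × Fin 2) (Fin p × Fin 2) ℝ :=
  Matrix.of fun ik jl => if ik.1 = jl.1 ∧ ik.2 ≠ jl.2 then lam ik.1 else 0

/-- The common stationary distribution `π = (1/2) ϑ (I_p ⊗ 1₂ᵀ)` of `Q̄` and `Q̃`. -/
noncomputable def piHat {p : ℕ} (θ : Fin p → ℝ) : Fin p × Fin 2 → ℝ :=
  (1/2 : ℝ) • (θ ᵥ* kronA p)


section AuxLemmas

private lemma mul_exp_of_mul_eq {m n : Type*} [Fintype m] [Fintype n] [DecidableEq m]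
    [DecidableEq n] (A : Matrix m n ℝ) (Q : Matrix n n ℝ) (G : Matrix m m ℝ)
    (h : A * Q = G * A) :
    A * NormedSpace.exp Q = NormedSpace.exp G * A := by
  letI : SeminormedRing (Matrix n n ℝ) := Matrix.linftyOpSemiNormedRing
  letI : NormedRing (Matrix n n ℝ) := Matrix.linftyOpNormedRing
  letI : NormedAlgebra ℝ (Matrix n n ℝ) := Matrix.linftyOpNormedAlgebra
  letI : SeminormedRing (Matrix m m ℝ) := Matrix.linftyOpSemiNormedRing
  letI : NormedRing (Matrix m m ℝ) := Matrix.linftyOpNormedRing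
  letI : NormedAlgebra ℝ (Matrix m m ℝ) := Matrix.linftyOpNormedAlgebra
  have hpow : ∀ k : ℕ, A * Q ^ k = G ^ k * A := by
    intro k
    induction k with
    | zero => simp
    | succ k ih =>
        rw [pow_succ, pow_succ, ← Matrix.mul_assoc, ih, Matrix.mul_assoc, h, ← Matrix.mul_assoc]
  let L : Matrix n n ℝ →ₗ[ℝ] Matrix m n ℝ :=
    { toFun := fun M => A * M
      map_add' := fun M N => Matrix.mul_add A M N
      map_smul' := fun c M => by simp [Matrix.mul_smul] }
  let R : Matrix m m ℝ →ₗ[ℝ] Matrix m n ℝ :=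
    { toFun := fun M => M * A
      map_add' := fun M N => Matrix.add_mul M N A
      map_smul' := fun c M => by simp [Matrix.smul_mul] }
  let L' : Matrix n n ℝ →L[ℝ] Matrix m n ℝ := ⟨L, L.continuous_of_finiteDimensional⟩
  let R' : Matrix m m ℝ →L[ℝ] Matrix m n ℝ := ⟨R, R.continuous_of_finiteDimensional⟩
  have hs := NormedSpace.expSeries_summable' (𝕂 := ℝ) Q
  have hsG := NormedSpace.expSeries_summable' (𝕂 := ℝ) G
  have hQ : NormedSpace.exp Q = ∑' k : ℕ, (k.factorial : ℝ)⁻¹ • Q ^ k := by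
    rw [NormedSpace.exp_eq_tsum ℝ]
  have hG' : NormedSpace.exp G = ∑' k : ℕ, (k.factorial : ℝ)⁻¹ • G ^ k := by
    rw [NormedSpace.exp_eq_tsum ℝ]
  rw [hQ, hG']
  have h1 : A * (∑' k : ℕ, (k.factorial : ℝ)⁻¹ • Q ^ k)
      = L' (∑' k : ℕ, (k.factorial : ℝ)⁻¹ • Q ^ k) := rfl
  have h2 : (∑' k : ℕ, (k.factorial : ℝ)⁻¹ • G ^ k) * A
      = R' (∑' k : ℕ, (k.factorial : ℝ)⁻¹ • G ^ k) := rfl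
  rw [h1, h2, L'.map_tsum hs, R'.map_tsum hsG]
  congr 1
  ext k : 1
  show A * ((k.factorial : ℝ)⁻¹ • Q ^ k) = ((k.factorial : ℝ)⁻¹ • G ^ k) * A
  rw [Matrix.mul_smul, hpow, Matrix.smul_mul]

private lemma exp_entry_continuous {n : Type*} [Fintype n] [DecidableEq n]
    (Q : Matrix n n ℝ) (a b : n) :
    Continuous fun u : ℝ => NormedSpace.exp (u • Q) a b := by
  letI : SeminormedRing (Matrix n n ℝ) := Matrix.linftyOpSemiNormedRing
  letI : NormedRing (Matrix n n ℝ) := Matrix.linftyOpNormedRing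
  letI : NormedAlgebra ℝ (Matrix n n ℝ) := Matrix.linftyOpNormedAlgebra
  letI : NormedAlgebra ℚ (Matrix n n ℝ) := NormedAlgebra.restrictScalars ℚ ℝ (Matrix n n ℝ)
  have h1 : Continuous fun u : ℝ => NormedSpace.exp (u • Q) :=
    NormedSpace.exp_continuous.comp (continuous_id.smul continuous_const)
  exact (continuous_apply b).comp ((continuous_apply a).comp h1)

private lemma kron_mul_Qbar {p : ℕ} (G : Matrix (Fin p) (Fin p) ℝ) (lam : Fin p → ℝ) :
    kronA p * Qbar G lam = G * kronA p := by
  ext i ⟨j, l⟩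
  simp only [Matrix.mul_apply, kronA, Qbar, Matrix.of_apply, Fintype.sum_prod_type,
    ite_mul, one_mul, zero_mul, Finset.sum_ite_eq, Finset.mem_univ, if_true, mul_ite, mul_one,
    mul_zero]
  rw [Finset.sum_eq_single i]
  · rcases eq_or_ne i j with rfl | hij
    · simp only [if_pos rfl, Fin.sum_univ_two]
      fin_cases l <;> simp
    · simp only [if_neg hij, Fin.sum_univ_two]
      fin_cases l <;> simp
  · intro x _ hx
    simp [hx]
  · simp

private lemma kron_mul_Qtil {p : ℕ} (G : Matrix (Fin p) (Fin p) ℝ) (lam : Fin p → ℝ) :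
    kronA p * Qtil G lam = G * kronA p := by
  ext i ⟨j, l⟩
  simp only [Matrix.mul_apply, kronA, Qtil, Matrix.of_apply, Fintype.sum_prod_type,
    ite_mul, one_mul, zero_mul, Finset.sum_ite_eq, Finset.mem_univ, if_true, mul_ite, mul_one,
    mul_zero]
  rw [Finset.sum_eq_single i]
  · rcases eq_or_ne i j with rfl | hij
    · simp only [if_pos rfl, Fin.sum_univ_two]
      fin_cases l <;> simp
    · simp only [if_neg hij, Fin.sum_univ_two]
      fin_cases l <;> simp
  · intro x _ hx
    simp [hx]
  · simp

private lemma kron_mul_transpose {p : ℕ} :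
    kronA p * (kronA p)ᵀ = (2 : ℝ) • (1 : Matrix (Fin p) (Fin p) ℝ) := by
  ext i j
  simp only [Matrix.mul_apply, kronA, Matrix.transpose_apply, Matrix.of_apply,
    Fintype.sum_prod_type, Fin.sum_univ_two, Matrix.smul_apply, Matrix.one_apply, smul_eq_mul]
  rcases eq_or_ne i j with rfl | hij
  · rw [Finset.sum_eq_single i]
    · norm_num
    · intro x _ hx; simp [hx]
    · simp
  · rw [Finset.sum_eq_zero]
    · simp [hij]
    · intro x _
      rcases eq_or_ne x i with rfl | hx
      · simp [Ne.symm hij, hij]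
      · simp [hx]

private lemma exp_entry_sum {p : ℕ} (G : Matrix (Fin p) (Fin p) ℝ)
    (Q : Matrix (Fin p × Fin 2) (Fin p × Fin 2) ℝ)
    (hQ : kronA p * Q = G * kronA p) (u : ℝ) (i j : Fin p) (l : Fin 2) :
    ∑ m : Fin 2, NormedSpace.exp (u • Q) (i, m) (j, l) = NormedSpace.exp (u • G) i j := by
  have h' : kronA p * (u • Q) = (u • G) * kronA p := by
    rw [Matrix.mul_smul, hQ, Matrix.smul_mul]
  have h := mul_exp_of_mul_eq (kronA p) (u • Q) (u • G) h'
  have h2 : (kronA p * NormedSpace.exp (u • Q)) i (j, l)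
      = (NormedSpace.exp (u • G) * kronA p) i (j, l) := by rw [h]
  simpa [Matrix.mul_apply, kronA, Fintype.sum_prod_type, ite_mul, mul_ite,
    Finset.sum_add_distrib, Finset.sum_ite_eq, Fin.sum_univ_two] using h2

private lemma kron_mul_dev {p : ℕ} (G : Matrix (Fin p) (Fin p) ℝ) (θ : Fin p → ℝ)
    (Q : Matrix (Fin p × Fin 2) (Fin p × Fin 2) ℝ) (hQ : kronA p * Q = G * kronA p)
    (DsG : Matrix (Fin p) (Fin p) ℝ) (hDsG : IsDeviation G θ DsG)
    (DsQ : Matrix (Fin p × Fin 2) (Fin p × Fin 2) ℝ) (hDsQ : IsDeviation Q (piHat θ) DsQ) :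
    kronA p * DsQ = DsG * kronA p := by
  have piHat_apply : ∀ (j : Fin p) (l : Fin 2), piHat θ (j, l) = θ j / 2 := by
    intro j l
    simp only [piHat, Pi.smul_apply, Matrix.vecMul, dotProduct, kronA, Matrix.of_apply,
      mul_ite, mul_one, mul_zero, Finset.sum_ite_eq, Finset.mem_univ, if_true, smul_eq_mul]
    ring
  ext i ⟨j, l⟩
  have hL : (kronA p * DsQ) i (j, l) = ∑ m : Fin 2, DsQ (i, m) (j, l) := by
    simp [Matrix.mul_apply, kronA, Fintype.sum_prod_type, ite_mul, Finset.sum_add_distrib,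
      Fin.sum_univ_two]
  have hR : (DsG * kronA p) i (j, l) = DsG i j := by
    simp [Matrix.mul_apply, kronA, mul_ite]
  rw [hL, hR]
  have hsum : ∑ m : Fin 2, DsQ (i, m) (j, l)
      = ∫ u in Set.Ioi (0:ℝ),
          ∑ m : Fin 2, (NormedSpace.exp (u • Q) (i, m) (j, l) - piHat θ (j, l)) := by
    rw [MeasureTheory.integral_finset_sum _ (fun m _ => (hDsQ (i, m) (j, l)).1)]
    exact Finset.sum_congr rfl fun m _ => (hDsQ (i, m) (j, l)).2
  rw [hsum, (hDsG i j).2]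
  refine MeasureTheory.integral_congr_ae (Filter.Eventually.of_forall fun u => ?_)
  simp only [Finset.sum_sub_distrib, exp_entry_sum G Q hQ u i j l, Finset.sum_const,
    piHat_apply, Finset.card_univ, Fintype.card_fin, nsmul_eq_mul, Nat.cast_ofNat]
  ring

private lemma kron_mul_tdev {p : ℕ} (G : Matrix (Fin p) (Fin p) ℝ) (θ : Fin p → ℝ)
    (Q : Matrix (Fin p × Fin 2) (Fin p × Fin 2) ℝ) (hQ : kronA p * Q = G * kronA p)
    (DtG : ℝ → Matrix (Fin p) (Fin p) ℝ) (hDtG : IsTransientDeviation G θ DtG)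
    (DtQ : ℝ → Matrix (Fin p × Fin 2) (Fin p × Fin 2) ℝ)
    (hDtQ : IsTransientDeviation Q (piHat θ) DtQ) (t : ℝ) :
    kronA p * DtQ t = DtG t * kronA p := by
  have piHat_apply : ∀ (j : Fin p) (l : Fin 2), piHat θ (j, l) = θ j / 2 := by
    intro j l
    simp only [piHat, Pi.smul_apply, Matrix.vecMul, dotProduct, kronA, Matrix.of_apply,
      mul_ite, mul_one, mul_zero, Finset.sum_ite_eq, Finset.mem_univ, if_true, smul_eq_mul]
    ring
  ext i ⟨j, l⟩
  have hL : (kronA p * DtQ t) i (j, l) = ∑ m : Fin 2, DtQ t (i, m) (j, l) := by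
    simp [Matrix.mul_apply, kronA, Fintype.sum_prod_type, ite_mul, Finset.sum_add_distrib,
      Fin.sum_univ_two]
  have hR : (DtG t * kronA p) i (j, l) = DtG t i j := by
    simp [Matrix.mul_apply, kronA, mul_ite]
  rw [hL, hR]
  have hint : ∀ m : Fin 2,
      IntegrableOn (fun u => NormedSpace.exp (u • Q) (i, m) (j, l) - piHat θ (j, l))
        (Set.Ioc (0:ℝ) t) MeasureTheory.volume := by
    intro m
    exact ((exp_entry_continuous Q (i, m) (j, l)).sub continuous_const).integrableOn_Ioc
  have hsum : ∑ m : Fin 2, DtQ t (i, m) (j, l)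
      = ∫ u in Set.Ioc (0:ℝ) t,
          ∑ m : Fin 2, (NormedSpace.exp (u • Q) (i, m) (j, l) - piHat θ (j, l)) := by
    rw [MeasureTheory.integral_finset_sum _ (fun m _ => hint m)]
    exact Finset.sum_congr rfl fun m _ => hDtQ t (i, m) (j, l)
  rw [hsum, hDtG t i j]
  refine MeasureTheory.integral_congr_ae (Filter.Eventually.of_forall fun u => ?_)
  simp only [Finset.sum_sub_distrib, exp_entry_sum G Q hQ u i j l, Finset.sum_const,
    piHat_apply, Finset.card_univ, Fintype.card_fin, nsmul_eq_mul, Nat.cast_ofNat]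
  ring

end AuxLemmas

theorem stmt14 {p : ℕ} (G : Matrix (Fin p) (Fin p) ℝ) (lam : Fin p → ℝ)
    (hG : IsGenerator G) (hirr : IsIrreducibleGen G) (hslow : IsSlow G lam)
    (θ : Fin p → ℝ) (hθ : IsStationaryDist G θ)
    (DsG : Matrix (Fin p) (Fin p) ℝ) (hDsG : IsDeviation G θ DsG)
    (DsQb DsQt : Matrix (Fin p × Fin 2) (Fin p × Fin 2) ℝ)
    (hDsQb : IsDeviation (Qbar G lam) (piHat θ) DsQb)
    (hDsQt : IsDeviation (Qtil G lam) (piHat θ) DsQt)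
    (DtQb DtQt : ℝ → Matrix (Fin p × Fin 2) (Fin p × Fin 2) ℝ)
    (hDtQb : IsTransientDeviation (Qbar G lam) (piHat θ) DtQb)
    (hDtQt : IsTransientDeviation (Qtil G lam) (piHat θ) DtQt)
    (DtG : ℝ → Matrix (Fin p) (Fin p) ℝ) (hDtG : IsTransientDeviation G θ DtG) :
    ∀ t : ℝ, 0 ≤ t →
      kronA p * (DsQt * DtQt t) * (kronA p)ᵀ = (2 : ℝ) • (DsG * DtG t) ∧
      kronA p * (DsQb * DtQb t) * (kronA p)ᵀ = (2 : ℝ) • (DsG * DtG t) := by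
  intro t _
  have key : ∀ (Ds Dt : Matrix (Fin p × Fin 2) (Fin p × Fin 2) ℝ),
      kronA p * Ds = DsG * kronA p → kronA p * Dt = DtG t * kronA p →
      kronA p * (Ds * Dt) * (kronA p)ᵀ = (2 : ℝ) • (DsG * DtG t) := by
    intro Ds Dt h1 h2
    rw [← Matrix.mul_assoc (kronA p) Ds Dt, h1, Matrix.mul_assoc DsG (kronA p) Dt, h2,
      ← Matrix.mul_assoc DsG (DtG t) (kronA p), Matrix.mul_assoc (DsG * DtG t) (kronA p),
      kron_mul_transpose, Matrix.mul_smul, mul_one]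
  exact ⟨key DsQt (DtQt t) (kron_mul_dev G θ _ (kron_mul_Qtil G lam) DsG hDsG DsQt hDsQt)
            (kron_mul_tdev G θ _ (kron_mul_Qtil G lam) DtG hDtG DtQt hDtQt t),
         key DsQb (DtQb t) (kron_mul_dev G θ _ (kron_mul_Qbar G lam) DsG hDsG DsQb hDsQb)
            (kron_mul_tdev G θ _ (kron_mul_Qbar G lam) DtG hDtG DtQb hDtQb t)⟩
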